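/- arXiv:2404.01668 — 4 statements merged into one kernel-verified Lean document; each statement's English description precedes it below -/
import Mathlib

section
/- Let F be a norm on ℝ^N (N ≥ 2) with dual norm F°, and suppose F° is (Fréchet) differentiable at a point x ∈ ℝ^N \ {0}. Then the vector field W(y) := F°(y)^{−N} · y is differentiable at x and its divergence at x, namely the trace of its Fréchet derivative at x, equals 0. -/
open scoped RealInnerProductSpace
open Pointwise

/-- The dual (polar) norm `F°(ξ) = sup { ξ · y : F(y) ≤ 1 }` of `F`. -/
noncomputable def polar {N : ℕ} (F : EuclideanSpace ℝ (Fin N) → ℝ)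
    (ξ : EuclideanSpace ℝ (Fin N)) : ℝ :=
  sSup ((fun y => (inner ℝ ξ y : ℝ)) '' {y | F y ≤ 1})

lemma subadd_sum {ι V : Type*} [AddCommMonoid V] (F : V → ℝ) (h0 : F 0 = 0)
    (hadd : ∀ x y, F (x + y) ≤ F x + F y) (s : Finset ι) (g : ι → V) :
    F (∑ i ∈ s, g i) ≤ ∑ i ∈ s, F (g i) := by
  induction s using Finset.cons_induction with
  | empty => simp [h0]
  | cons i s hi ih =>
      rw [Finset.sum_cons, Finset.sum_cons]
      exact (hadd _ _).trans (by linarith)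

set_option maxHeartbeats 1000000 in
/-- If `F` is a norm on `ℝ^N` (`N ≥ 2`) and `F°` is differentiable at `x ≠ 0`,
then the field `W(y) = F°(y)^{−N} • y` is differentiable at `x` and its
divergence (the trace of its Fréchet derivative) at `x` equals `0`. -/
theorem div_capacitary_flux_field {N : ℕ} (hN : 2 ≤ N)
    (F : EuclideanSpace ℝ (Fin N) → ℝ)
    (hF_add : ∀ x y, F (x + y) ≤ F x + F y)
    (hF_smul : ∀ (a : ℝ) x, F (a • x) = |a| * F x)
    (hF_pos : ∀ x, x ≠ 0 → 0 < F x)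
    (x : EuclideanSpace ℝ (Fin N)) (hx : x ≠ 0)
    (hdiff : DifferentiableAt ℝ (polar F) x) :
    DifferentiableAt ℝ
      (fun y : EuclideanSpace ℝ (Fin N) => (polar F y ^ (-(N : ℤ))) • y) x ∧
    LinearMap.trace ℝ (EuclideanSpace ℝ (Fin N))
      (fderiv ℝ
        (fun y : EuclideanSpace ℝ (Fin N) => (polar F y ^ (-(N : ℤ))) • y) x).toLinearMap
      = 0 := by
  classical
  have hF0 : F 0 = 0 := by simpa using hF_smul 0 0
  have hFneg : ∀ y, F (-y) = F y := by
    intro y; rw [← neg_one_smul ℝ y, hF_smul]; simp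
  have hF_nonneg : ∀ y, 0 ≤ F y := by
    intro y
    have h1 := hF_add y (-y)
    rw [add_neg_cancel, hF0, hFneg] at h1
    linarith
  -- upper bound F ≤ C ‖·‖
  set b := EuclideanSpace.basisFun (Fin N) ℝ with hb
  set C : ℝ := (∑ i, F (b i)) + 1 with hC
  have hCpos : 0 < C := by
    have : 0 ≤ ∑ i, F (b i) := Finset.sum_nonneg fun i _ => hF_nonneg _
    linarith
  have habs : ∀ (y : (EuclideanSpace ℝ (Fin N))) i, |y i| ≤ ‖y‖ := by
    intro y i
    have h1 := abs_real_inner_le_norm ((b : OrthonormalBasis (Fin N) ℝ (EuclideanSpace ℝ (Fin N))) i) y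
    have h2 : ((b : OrthonormalBasis (Fin N) ℝ (EuclideanSpace ℝ (Fin N))) i : (EuclideanSpace ℝ (Fin N))) = EuclideanSpace.single i (1:ℝ) := by
      rw [hb, EuclideanSpace.basisFun_apply]
    rw [h2] at h1
    rw [EuclideanSpace.inner_single_left] at h1
    simp only [map_one, one_mul] at h1
    have h3 : ‖EuclideanSpace.single i (1:ℝ)‖ = 1 := by
      rw [EuclideanSpace.norm_single]; norm_num
    rw [h3, one_mul] at h1
    exact h1
  have hub : ∀ y : (EuclideanSpace ℝ (Fin N)), F y ≤ C * ‖y‖ := by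
    intro y
    have hrepr : (∑ i, y i • (b i : (EuclideanSpace ℝ (Fin N)))) = y := by
      have := b.sum_repr y
      rw [hb] at this ⊢
      simpa [EuclideanSpace.basisFun_repr] using this
    calc F y = F (∑ i, y i • (b i : (EuclideanSpace ℝ (Fin N)))) := by rw [hrepr]
      _ ≤ ∑ i, F (y i • (b i : (EuclideanSpace ℝ (Fin N)))) := subadd_sum F hF0 hF_add _ _
      _ = ∑ i, |y i| * F (b i) := by simp [hF_smul]
      _ ≤ ∑ i, ‖y‖ * F (b i) :=
          Finset.sum_le_sum fun i _ => mul_le_mul_of_nonneg_right (habs y i) (hF_nonneg _)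
      _ = (∑ i, F (b i)) * ‖y‖ := by rw [← Finset.mul_sum, mul_comm]
      _ ≤ C * ‖y‖ := by
          apply mul_le_mul_of_nonneg_right _ (norm_nonneg y)
          rw [hC]; linarith
  -- continuity of F
  have hFcont : Continuous F := by
    refine (LipschitzWith.of_dist_le_mul (K := ⟨C, hCpos.le⟩) (f := F) ?_).continuous
    intro a b'
    rw [Real.dist_eq, dist_eq_norm]
    rw [abs_sub_le_iff]
    constructor
    · have h1 := hF_add b' (a - b')
      rw [add_sub_cancel] at h1
      have h2 := hub (a - b')
      change _ ≤ C * _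
      linarith
    · have h1 := hF_add a (b' - a)
      rw [add_sub_cancel] at h1
      have h2 := hub (b' - a)
      have h3 : ‖b' - a‖ = ‖a - b'‖ := norm_sub_rev _ _
      rw [h3] at h2
      change _ ≤ C * _
      linarith
  -- lower bound c‖·‖ ≤ F
  have : Nontrivial (EuclideanSpace ℝ (Fin N)) := by
    have h1 : 0 < Module.finrank ℝ (EuclideanSpace ℝ (Fin N)) := by
      rw [finrank_euclideanSpace_fin]; omega
    exact Module.nontrivial_of_finrank_pos h1
  obtain ⟨z, hzmem, hzmin⟩ := (isCompact_sphere (0:(EuclideanSpace ℝ (Fin N))) 1).exists_isMinOn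
    (NormedSpace.sphere_nonempty.mpr zero_le_one) hFcont.continuousOn
  have hz1 : ‖z‖ = 1 := by simpa using mem_sphere_zero_iff_norm.mp hzmem
  have hz0 : z ≠ 0 := by intro h; rw [h] at hz1; simp at hz1
  set c : ℝ := F z with hc
  have hcpos : 0 < c := hF_pos z hz0
  have hlb : ∀ y : (EuclideanSpace ℝ (Fin N)), c * ‖y‖ ≤ F y := by
    intro y
    rcases eq_or_ne y 0 with rfl | hy
    · simp [hF0]
    · have hny : 0 < ‖y‖ := norm_pos_iff.mpr hy
      have hunit : (‖y‖⁻¹ • y) ∈ Metric.sphere (0:(EuclideanSpace ℝ (Fin N))) 1 := by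
        rw [mem_sphere_zero_iff_norm, norm_smul, norm_inv, norm_norm,
          inv_mul_cancel₀ hny.ne']
      have hmin := hzmin hunit
      have hFy : F y = ‖y‖ * F (‖y‖⁻¹ • y) := by
        rw [hF_smul, abs_of_pos (inv_pos.mpr hny)]
        field_simp
      rw [hFy]
      calc c * ‖y‖ = ‖y‖ * c := mul_comm _ _
        _ ≤ ‖y‖ * F (‖y‖⁻¹ • y) := mul_le_mul_of_nonneg_left hmin hny.le
  -- BddAbove
  have hbdd : ∀ ξ : (EuclideanSpace ℝ (Fin N)), BddAbove ((fun y => (inner ℝ ξ y : ℝ)) '' {y | F y ≤ 1}) := by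
    intro ξ
    refine ⟨‖ξ‖ * (1 / c), ?_⟩
    rintro r ⟨y, hy, rfl⟩
    have h1 : c * ‖y‖ ≤ 1 := (hlb y).trans hy
    have h2 : ‖y‖ ≤ 1 / c := (le_div_iff₀ hcpos).mpr (by linarith)
    calc (inner ℝ ξ y : ℝ) ≤ ‖ξ‖ * ‖y‖ := real_inner_le_norm ξ y
      _ ≤ ‖ξ‖ * (1 / c) := mul_le_mul_of_nonneg_left h2 (norm_nonneg ξ)
  -- homogeneity of polar
  have hpolar_smul : ∀ (t : ℝ), 0 ≤ t → ∀ ξ : (EuclideanSpace ℝ (Fin N)), polar F (t • ξ) = t * polar F ξ := by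
    intro t ht ξ
    unfold polar
    have himg : (fun y : (EuclideanSpace ℝ (Fin N)) => (inner ℝ (t • ξ) y : ℝ)) '' {y | F y ≤ 1}
        = t • ((fun y : (EuclideanSpace ℝ (Fin N)) => (inner ℝ ξ y : ℝ)) '' {y | F y ≤ 1}) := by
      rw [← Set.image_smul, Set.image_image]
      apply Set.image_congr
      intro y _
      rw [real_inner_smul_left, smul_eq_mul]
    rw [himg, Real.sSup_smul_of_nonneg ht, smul_eq_mul]
  -- positivity of polar F x
  have hc0pos : 0 < polar F x := by
    have hFx : 0 < F x := hF_pos x hx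
    have hy0 : ((F x)⁻¹ • x) ∈ {y : (EuclideanSpace ℝ (Fin N)) | F y ≤ 1} := by
      simp only [Set.mem_setOf_eq, hF_smul, abs_of_pos (inv_pos.mpr hFx)]
      rw [inv_mul_cancel₀ hFx.ne']
    have hle := le_csSup (hbdd x) (Set.mem_image_of_mem _ hy0)
    have hval : (inner ℝ x ((F x)⁻¹ • x) : ℝ) = (F x)⁻¹ * ‖x‖ ^ 2 := by
      rw [real_inner_smul_right, real_inner_self_eq_norm_sq]
    have hpos : 0 < (F x)⁻¹ * ‖x‖ ^ 2 := by
      have : 0 < ‖x‖ := norm_pos_iff.mpr hx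
      positivity
    rw [hval] at hle
    unfold polar
    linarith
  set c0 : ℝ := polar F x with hc0
  set u' : (EuclideanSpace ℝ (Fin N)) →L[ℝ] ℝ := fderiv ℝ (polar F) x with hu'
  -- Euler relation
  have heuler : u' x = c0 := by
    have hcurve : HasDerivAt (fun t : ℝ => t • x) x 1 := by
      have h := (hasDerivAt_id (1:ℝ)).smul_const x
      simpa using h
    have h1 : HasDerivAt (fun t : ℝ => polar F (t • x)) (u' x) 1 := by
      have hd : HasFDerivAt (polar F) u' ((1:ℝ) • x) := by
        rw [one_smul]; exact hdiff.hasFDerivAt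
      exact hd.comp_hasDerivAt 1 hcurve
    have h2 : (fun t : ℝ => polar F (t • x)) =ᶠ[nhds (1:ℝ)] (fun t => t * c0) := by
      filter_upwards [Ioi_mem_nhds (zero_lt_one)] with t ht
      exact hpolar_smul t (le_of_lt ht) x
    have h3 : HasDerivAt (fun t : ℝ => t * c0) c0 1 := by
      simpa using (hasDerivAt_id (1:ℝ)).mul_const c0
    have h4 : HasDerivAt (fun t : ℝ => polar F (t • x)) c0 1 :=
      h3.congr_of_eventuallyEq h2
    exact h1.unique h4
  -- derivative of zpow composite
  set a : ℝ := ((-(N:ℤ) : ℤ) : ℝ) * c0 ^ (-(N:ℤ) - 1) with ha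
  have hzc : HasFDerivAt (fun y : (EuclideanSpace ℝ (Fin N)) => polar F y ^ (-(N:ℤ))) (a • u') x := by
    have hz := hasDerivAt_zpow (-(N:ℤ)) c0 (Or.inl hc0pos.ne')
    exact hz.comp_hasFDerivAt x hdiff.hasFDerivAt
  have hid : HasFDerivAt (fun y : (EuclideanSpace ℝ (Fin N)) => y) (ContinuousLinearMap.id ℝ (EuclideanSpace ℝ (Fin N))) x := hasFDerivAt_id x
  have hW : HasFDerivAt (fun y : (EuclideanSpace ℝ (Fin N)) => (polar F y ^ (-(N:ℤ))) • y)
      ((c0 ^ (-(N:ℤ))) • ContinuousLinearMap.id ℝ (EuclideanSpace ℝ (Fin N)) + (a • u').smulRight x) x :=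
    hzc.smul hid
  refine ⟨hW.differentiableAt, ?_⟩
  rw [hW.fderiv]
  have hcoe : ((((c0 ^ (-(N:ℤ))) • ContinuousLinearMap.id ℝ (EuclideanSpace ℝ (Fin N)) + (a • u').smulRight x) :
      (EuclideanSpace ℝ (Fin N)) →L[ℝ] (EuclideanSpace ℝ (Fin N))) : (EuclideanSpace ℝ (Fin N)) →ₗ[ℝ] (EuclideanSpace ℝ (Fin N)))
      = (c0 ^ (-(N:ℤ))) • (LinearMap.id : (EuclideanSpace ℝ (Fin N)) →ₗ[ℝ] (EuclideanSpace ℝ (Fin N))) +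
        (LinearMap.toSpanSingleton ℝ (EuclideanSpace ℝ (Fin N)) x).comp ((a • u' : (EuclideanSpace ℝ (Fin N)) →L[ℝ] ℝ) : (EuclideanSpace ℝ (Fin N)) →ₗ[ℝ] ℝ) := by
    ext v
    simp [LinearMap.toSpanSingleton_apply]
  rw [hcoe, map_add, map_smul, LinearMap.trace_id]
  have htr2 : LinearMap.trace ℝ (EuclideanSpace ℝ (Fin N))
      ((LinearMap.toSpanSingleton ℝ (EuclideanSpace ℝ (Fin N)) x).comp ((a • u' : (EuclideanSpace ℝ (Fin N)) →L[ℝ] ℝ) : (EuclideanSpace ℝ (Fin N)) →ₗ[ℝ] ℝ))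
      = a * u' x := by
    rw [LinearMap.trace_comp_comm']
    have heq : (((a • u' : (EuclideanSpace ℝ (Fin N)) →L[ℝ] ℝ) : (EuclideanSpace ℝ (Fin N)) →ₗ[ℝ] ℝ).comp (LinearMap.toSpanSingleton ℝ (EuclideanSpace ℝ (Fin N)) x))
        = (a * u' x) • (LinearMap.id : ℝ →ₗ[ℝ] ℝ) := by
      ext r
      simp [LinearMap.toSpanSingleton_apply, mul_comm, mul_left_comm]
    rw [heq, map_smul, LinearMap.trace_id]
    simp
  rw [htr2]
  have hfr : (Module.finrank ℝ (EuclideanSpace ℝ (Fin N)) : ℝ) = (N : ℝ) := by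
    rw [finrank_euclideanSpace_fin]
  rw [hfr, heuler, ha]
  have hkey : c0 ^ (-(N:ℤ) - 1) * c0 = c0 ^ (-(N:ℤ)) := by
    rw [zpow_sub_one₀ hc0pos.ne']
    field_simp
  rw [smul_eq_mul, mul_assoc, hkey]
  push_cast
  ring
end

section
/- Let F be a norm on ℝ^N (N ≥ 2) with dual norm F°, let R > 0, and define v(x) := (N − 1) log(F°(x)/R) and z(x) := x / F°(x) for x ≠ 0. Then at every point x ∈ ℝ^N \ {0} where F° is (Fréchet) differentiable: (i) v is differentiable at x with ∇v(x) = (N − 1) ∇F°(x) / F°(x); (ii) F(∇v(x)) = (N − 1)/F°(x); (iii) z(x) · ∇v(x) = F(∇v(x)) and F°(z(x)) = 1, so that z(x) is a subgradient of F at ∇v(x); and (iv) the divergence of z at x (the trace of the Fréchet derivative of z at x) equals F(∇v(x)). Moreover v(x) = 0 whenever F°(x) = R. -/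
open scoped RealInnerProductSpace

/-- Bundle of the norm axioms used in this file. -/
structure IsNormAux {N : ℕ} (F : EuclideanSpace ℝ (Fin N) → ℝ) : Prop where
  add : ∀ x y, F (x + y) ≤ F x + F y
  smul : ∀ (a : ℝ) x, F (a • x) = |a| * F x
  pos : ∀ x, x ≠ 0 → 0 < F x

namespace IsNormAux

variable {N : ℕ} {F : EuclideanSpace ℝ (Fin N) → ℝ} (hF : IsNormAux F)
include hF

lemma zero : F 0 = 0 := by simpa using hF.smul 0 0

lemma nonneg (x : EuclideanSpace ℝ (Fin N)) : 0 ≤ F x := by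
  rcases eq_or_ne x 0 with rfl | h
  · simp [hF.zero]
  · exact (hF.pos x h).le

lemma neg (x : EuclideanSpace ℝ (Fin N)) : F (-x) = F x := by
  simpa using hF.smul (-1) x

lemma upper : ∃ C : ℝ, 0 ≤ C ∧ ∀ x, F x ≤ C * ‖x‖ := by
  classical
  set b := EuclideanSpace.basisFun (Fin N) ℝ
  refine ⟨∑ i, F (b i), Finset.sum_nonneg fun i _ => hF.nonneg _, fun x => ?_⟩
  have hx : ∑ i, x i • (b i : EuclideanSpace ℝ (Fin N)) = x := by
    have := b.toBasis.sum_repr x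
    simpa [b, EuclideanSpace.basisFun_repr] using this
  calc F x = F (∑ i, x i • (b i : EuclideanSpace ℝ (Fin N))) := by rw [hx]
    _ ≤ ∑ i, F (x i • (b i : EuclideanSpace ℝ (Fin N))) :=
        Finset.le_sum_of_subadditive F hF.zero.le hF.add _ _
    _ = ∑ i, |x i| * F (b i) := by simp [hF.smul]
    _ ≤ ∑ i, ‖x‖ * F (b i) := by
        refine Finset.sum_le_sum fun i _ => ?_
        refine mul_le_mul_of_nonneg_right ?_ (hF.nonneg _)
        calc |x i| = |(inner ℝ (b i : EuclideanSpace ℝ (Fin N)) x : ℝ)| := by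
              simp [b, EuclideanSpace.basisFun_apply, EuclideanSpace.inner_single_left]
          _ ≤ ‖(b i : EuclideanSpace ℝ (Fin N))‖ * ‖x‖ := abs_real_inner_le_norm _ _
          _ = ‖x‖ := by
              simp [b, EuclideanSpace.basisFun_apply, EuclideanSpace.norm_single]
    _ = (∑ i, F (b i)) * ‖x‖ := by rw [← Finset.mul_sum, mul_comm]

lemma continuous : Continuous F := by
  obtain ⟨C, hC0, hC⟩ := hF.upper
  have key : ∀ a b : EuclideanSpace ℝ (Fin N), F a - F b ≤ C * ‖a - b‖ := by
    intro a b
    have h1 : F a ≤ F b + F (a - b) := by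
      have := hF.add b (a - b); simpa using this
    have := hC (a - b)
    linarith
  refine (LipschitzWith.of_dist_le_mul (K := C.toNNReal) (f := F) fun a b => ?_).continuous
  rw [Real.dist_eq, Real.coe_toNNReal _ hC0, dist_eq_norm, abs_sub_le_iff]
  refine ⟨key a b, ?_⟩
  have := key b a
  rwa [norm_sub_rev] at this

lemma lower (hN : 2 ≤ N) : ∃ ε : ℝ, 0 < ε ∧ ∀ x, ε * ‖x‖ ≤ F x := by
  haveI : Nontrivial (EuclideanSpace ℝ (Fin N)) := by
    refine ⟨EuclideanSpace.single (⟨0, by omega⟩ : Fin N) (1:ℝ), 0, fun h => ?_⟩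
    have h2 : ‖EuclideanSpace.single (⟨0, by omega⟩ : Fin N) (1:ℝ)‖ = 1 := by
      simp [EuclideanSpace.norm_single]
    rw [h] at h2; simp at h2
  have hsph : (Metric.sphere (0 : EuclideanSpace ℝ (Fin N)) 1).Nonempty :=
    NormedSpace.sphere_nonempty.mpr (by norm_num)
  obtain ⟨y0, hy0mem, hy0min⟩ := (isCompact_sphere (0 : EuclideanSpace ℝ (Fin N)) 1).exists_isMinOn
    hsph hF.continuous.continuousOn
  have hy0norm : ‖y0‖ = 1 := by simpa using hy0mem
  have hy0ne : y0 ≠ 0 := by intro h; rw [h] at hy0norm; simp at hy0norm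
  refine ⟨F y0, hF.pos _ hy0ne, fun x => ?_⟩
  rcases eq_or_ne x 0 with rfl | hx
  · simp [hF.zero]
  have hxn : (0:ℝ) < ‖x‖ := norm_pos_iff.mpr hx
  have hmem : ‖x‖⁻¹ • x ∈ Metric.sphere (0 : EuclideanSpace ℝ (Fin N)) 1 := by
    simp [norm_smul, abs_of_pos (inv_pos.mpr hxn), inv_mul_cancel₀ hxn.ne']
  have h2 : F y0 ≤ F (‖x‖⁻¹ • x) := hy0min hmem
  rw [hF.smul, abs_of_pos (inv_pos.mpr hxn)] at h2
  calc F y0 * ‖x‖ ≤ (‖x‖⁻¹ * F x) * ‖x‖ := by nlinarith [hF.nonneg x]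
    _ = F x := by field_simp

end IsNormAux

section Polar

variable {N : ℕ} {F : EuclideanSpace ℝ (Fin N) → ℝ} (hF : IsNormAux F) (hN : 2 ≤ N)
include hF

lemma polar_set_nonempty (x : EuclideanSpace ℝ (Fin N)) :
    ((fun y => (inner ℝ x y : ℝ)) '' {y | F y ≤ 1}).Nonempty :=
  ⟨0, 0, by simp [hF.zero], by simp⟩

include hN in
lemma polar_bddAbove (x : EuclideanSpace ℝ (Fin N)) :
    BddAbove ((fun y => (inner ℝ x y : ℝ)) '' {y | F y ≤ 1}) := by
  obtain ⟨ε, hε0, hε⟩ := hF.lower hN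
  refine ⟨‖x‖ * ε⁻¹, ?_⟩
  rintro _ ⟨y, hy, rfl⟩
  have h1 : ‖y‖ ≤ ε⁻¹ := by
    have h := (hε y).trans hy
    rw [← one_div, le_div_iff₀ hε0]
    nlinarith
  calc (inner ℝ x y : ℝ) ≤ ‖x‖ * ‖y‖ := real_inner_le_norm x y
    _ ≤ ‖x‖ * ε⁻¹ := mul_le_mul_of_nonneg_left h1 (norm_nonneg x)

include hN in
lemma inner_le_polar {y : EuclideanSpace ℝ (Fin N)} (x : EuclideanSpace ℝ (Fin N))
    (hy : F y ≤ 1) : (inner ℝ x y : ℝ) ≤ polar F x :=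
  le_csSup (polar_bddAbove hF hN x) ⟨y, hy, rfl⟩

lemma polar_le {x : EuclideanSpace ℝ (Fin N)} {c : ℝ}
    (h : ∀ y, F y ≤ 1 → (inner ℝ x y : ℝ) ≤ c) : polar F x ≤ c := by
  refine csSup_le (polar_set_nonempty hF x) ?_
  rintro _ ⟨y, hy, rfl⟩
  exact h y hy

include hN in
lemma polar_nonneg (x : EuclideanSpace ℝ (Fin N)) : 0 ≤ polar F x := by
  have := inner_le_polar hF hN (y := 0) x (by simp [hF.zero])
  simpa using this

include hN in
lemma polar_pos {x : EuclideanSpace ℝ (Fin N)} (hx : x ≠ 0) : 0 < polar F x := by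
  have hFx : 0 < F x := hF.pos x hx
  have hy : F ((F x)⁻¹ • x) ≤ 1 := by
    rw [hF.smul, abs_of_pos (inv_pos.mpr hFx), inv_mul_cancel₀ hFx.ne']
  have h := inner_le_polar hF hN x hy
  rw [real_inner_smul_right, real_inner_self_eq_norm_sq] at h
  have hxn : (0:ℝ) < ‖x‖ := norm_pos_iff.mpr hx
  calc (0:ℝ) < (F x)⁻¹ * ‖x‖ ^ 2 := by positivity
    _ ≤ polar F x := h

include hN in
lemma inner_le_polar_mul (x y : EuclideanSpace ℝ (Fin N)) :
    (inner ℝ x y : ℝ) ≤ polar F x * F y := by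
  rcases eq_or_ne y 0 with rfl | hy
  · simp [hF.zero]
  have hFy : 0 < F y := hF.pos y hy
  have h1 : F ((F y)⁻¹ • y) ≤ 1 := by
    rw [hF.smul, abs_of_pos (inv_pos.mpr hFy), inv_mul_cancel₀ hFy.ne']
  have h := inner_le_polar hF hN x h1
  rw [real_inner_smul_right] at h
  calc (inner ℝ x y : ℝ) = ((F y)⁻¹ * (inner ℝ x y : ℝ)) * F y := by field_simp
    _ ≤ polar F x * F y := mul_le_mul_of_nonneg_right h hFy.le

lemma polar_zero : polar F (0 : EuclideanSpace ℝ (Fin N)) = 0 := by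
  refine le_antisymm (polar_le hF fun y _ => by simp) ?_
  refine le_csSup ⟨0, ?_⟩ ⟨0, by simp [hF.zero], by simp⟩
  rintro _ ⟨y, _, rfl⟩
  simp

include hN in
lemma polar_add (x y : EuclideanSpace ℝ (Fin N)) :
    polar F (x + y) ≤ polar F x + polar F y := by
  refine polar_le hF fun u hu => ?_
  rw [inner_add_left]
  exact add_le_add (inner_le_polar hF hN x hu) (inner_le_polar hF hN y hu)

include hN in
lemma polar_smul (a : ℝ) (x : EuclideanSpace ℝ (Fin N)) :
    polar F (a • x) = |a| * polar F x := by
  have hnn : ∀ (b : ℝ), 0 ≤ b → ∀ u : EuclideanSpace ℝ (Fin N),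
      polar F (b • u) = b * polar F u := by
    intro b hb u
    rcases eq_or_lt_of_le hb with rfl | hb0
    · simp [polar_zero hF]
    refine le_antisymm (polar_le hF fun y hy => ?_) ?_
    · rw [real_inner_smul_left]
      exact mul_le_mul_of_nonneg_left (inner_le_polar hF hN u hy) hb0.le
    · rw [← le_div_iff₀' hb0]
      refine polar_le hF fun y hy => ?_
      rw [le_div_iff₀' hb0, ← real_inner_smul_left]
      exact inner_le_polar hF hN (b • u) hy
  have hneg : ∀ u : EuclideanSpace ℝ (Fin N), polar F (-u) = polar F u := by
    intro u
    have h1 : ∀ w : EuclideanSpace ℝ (Fin N), polar F (-w) ≤ polar F w := by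
      intro w
      refine polar_le hF fun y hy => ?_
      have hy' : F (-y) ≤ 1 := by rw [hF.neg]; exact hy
      have := inner_le_polar hF hN w hy'
      rwa [← inner_neg_neg, neg_neg] at this
    exact le_antisymm (h1 u) (by simpa using h1 (-u))
  rcases le_or_gt 0 a with ha | ha
  · rw [hnn a ha x, abs_of_nonneg ha]
  · have : a • x = -((-a) • x) := by simp
    rw [this, hneg, hnn (-a) (by linarith) x, abs_of_neg ha]

end Polar

section HB

variable {N : ℕ} {F : EuclideanSpace ℝ (Fin N) → ℝ} (hF : IsNormAux F) (hN : 2 ≤ N)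
include hF hN

/-- Hahn–Banach: dual attainment for the polar norm. -/
lemma exists_dual_vector_polar (w : EuclideanSpace ℝ (Fin N)) :
    ∃ y, polar F y ≤ 1 ∧ (inner ℝ y w : ℝ) = F w := by
  rcases eq_or_ne w 0 with rfl | hw
  · exact ⟨0, by simp [polar_zero hF], by simp [hF.zero]⟩
  set p : (EuclideanSpace ℝ (Fin N)) →ₗ.[ℝ] ℝ := LinearPMap.mkSpanSingleton w (F w) hw with hp
  have hpdom : p.domain = Submodule.span ℝ {w} := rfl
  have hf : ∀ u : p.domain, p u ≤ F u := by
    rintro ⟨u, hu⟩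
    rw [hpdom] at hu
    obtain ⟨c, rfl⟩ := Submodule.mem_span_singleton.mp hu
    have happ : p ⟨c • w, hu⟩ = c • F w := LinearPMap.mkSpanSingleton'_apply _ _ _ c _
    rw [happ, hF.smul]
    have h1 : c ≤ |c| := le_abs_self c
    have h2 : 0 ≤ F w := hF.nonneg w
    simp only [smul_eq_mul]
    nlinarith
  obtain ⟨g, hg1, hg2⟩ := exists_extension_of_le_sublinear p F
    (fun c hc u => by rw [hF.smul, abs_of_pos hc]) hF.add hf
  set gc : EuclideanSpace ℝ (Fin N) →L[ℝ] ℝ := LinearMap.toContinuousLinearMap g with hgc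
  set y := (InnerProductSpace.toDual ℝ (EuclideanSpace ℝ (Fin N))).symm gc with hy
  have hyu : ∀ u, (inner ℝ y u : ℝ) = g u := fun u => InnerProductSpace.toDual_symm_apply
  refine ⟨y, ?_, ?_⟩
  · refine polar_le hF fun u hu => ?_
    rw [hyu]
    exact (hg2 u).trans hu
  · rw [hyu]
    have hmem : w ∈ p.domain := by rw [hpdom]; exact Submodule.mem_span_singleton_self w
    have := hg1 ⟨w, hmem⟩
    rw [this]
    exact LinearPMap.mkSpanSingleton_apply ℝ ℝ hw (F w)

end HB

section Deriv

variable {N : ℕ} {F : EuclideanSpace ℝ (Fin N) → ℝ} (hF : IsNormAux F) (hN : 2 ≤ N)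
include hF hN

lemma polar_fderiv_le {x : EuclideanSpace ℝ (Fin N)}
    (hd : DifferentiableAt ℝ (polar F) x) (w : EuclideanSpace ℝ (Fin N)) :
    fderiv ℝ (polar F) x w ≤ polar F w := by
  set G := polar F with hG
  set d := fderiv ℝ G x with hdd
  have h1 : HasDerivAt (fun t : ℝ => x + t • w) w 0 := by
    simpa using ((hasDerivAt_id (0:ℝ)).smul_const w).const_add x
  have h2 : HasFDerivAt G d ((fun t : ℝ => x + t • w) 0) := by
    simpa using hd.hasFDerivAt
  have hφ : HasDerivAt (fun t : ℝ => G (x + t • w)) (d w) 0 := by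
    exact h2.comp_hasDerivAt 0 h1
  have htend : Filter.Tendsto (slope (fun t : ℝ => G (x + t • w)) 0)
      (nhdsWithin 0 (Set.Ioi 0)) (nhds (d w)) :=
    (hasDerivAt_iff_tendsto_slope.mp hφ).mono_left
      (nhdsWithin_mono _ fun t ht => ne_of_gt ht)
  refine le_of_tendsto htend ?_
  filter_upwards [self_mem_nhdsWithin] with t ht
  have ht0 : (0:ℝ) < t := ht
  have hb : G (x + t • w) ≤ G x + t * G w := by
    calc G (x + t • w) ≤ G x + G (t • w) := polar_add hF hN x (t • w)
      _ = G x + t * G w := by rw [hG, polar_smul hF hN, abs_of_pos ht0]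
  rw [slope_def_field]
  simp only [zero_smul, add_zero, sub_zero]
  rw [div_le_iff₀ ht0]
  linarith

lemma polar_fderiv_self {x : EuclideanSpace ℝ (Fin N)}
    (hd : DifferentiableAt ℝ (polar F) x) :
    fderiv ℝ (polar F) x x = polar F x := by
  set G := polar F with hG
  set d := fderiv ℝ G x with hdd
  have h1 : HasDerivAt (fun t : ℝ => t • x) x 1 := by
    simpa using (hasDerivAt_id (1:ℝ)).smul_const x
  have h2 : HasFDerivAt G d ((fun t : ℝ => t • x) 1) := by
    simpa using hd.hasFDerivAt
  have hφ : HasDerivAt (fun t : ℝ => G (t • x)) (d x) 1 := by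
    exact h2.comp_hasDerivAt 1 h1
  have heq : (fun t : ℝ => t * G x) =ᶠ[nhds (1:ℝ)] (fun t : ℝ => G (t • x)) := by
    filter_upwards [isOpen_Ioi.mem_nhds (by norm_num : (1:ℝ) ∈ Set.Ioi (0:ℝ))] with t ht
    rw [hG, polar_smul hF hN, abs_of_pos ht]
  have hψ : HasDerivAt (fun t : ℝ => t * G x) (d x) 1 := hφ.congr_of_eventuallyEq heq
  have hψ' : HasDerivAt (fun t : ℝ => t * G x) (G x) 1 := hasDerivAt_mul_const (G x)
  exact hψ.unique hψ'

end Deriv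

lemma trace_smulRight {N : ℕ} (f : (EuclideanSpace ℝ (Fin N)) →ₗ[ℝ] ℝ)
    (x : EuclideanSpace ℝ (Fin N)) :
    LinearMap.trace ℝ _ (LinearMap.smulRight f x) = f x := by
  have h : LinearMap.smulRight f x = (LinearMap.toSpanSingleton ℝ _ x).comp f := by
    ext u; simp [LinearMap.toSpanSingleton_apply]
  rw [h, LinearMap.trace_comp_comm']
  have h2 : f.comp (LinearMap.toSpanSingleton ℝ _ x) = (f x) • LinearMap.id := by
    refine LinearMap.ext_ring ?_
    simp [LinearMap.toSpanSingleton_apply]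
  rw [h2, map_smul, LinearMap.trace_id]
  simp

/-- Example 9.1 of the paper: `v(x) = (N−1) log(F°(x)/R)` with vector field
`z(x) = x/F°(x)` solves the anisotropic IMCF equation `div z = F(∇v)` outside
the Wulff shape `W_R`, pointwise at every point of differentiability of `F°`. -/
theorem wulff_shape_explicit_solution {N : ℕ} (hN : 2 ≤ N)
    (F : EuclideanSpace ℝ (Fin N) → ℝ)
    (hF_add : ∀ x y, F (x + y) ≤ F x + F y)
    (hF_smul : ∀ (a : ℝ) x, F (a • x) = |a| * F x)
    (hF_pos : ∀ x, x ≠ 0 → 0 < F x)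
    (R : ℝ) (hR : 0 < R)
    (v : EuclideanSpace ℝ (Fin N) → ℝ)
    (hv : ∀ x, v x = ((N : ℝ) - 1) * Real.log (polar F x / R))
    (z : EuclideanSpace ℝ (Fin N) → EuclideanSpace ℝ (Fin N))
    (hz : ∀ x, z x = (polar F x)⁻¹ • x) :
    (∀ x : EuclideanSpace ℝ (Fin N), x ≠ 0 → DifferentiableAt ℝ (polar F) x →
      -- (i) differentiability of v and formula for its gradient
      (DifferentiableAt ℝ v x ∧
        gradient v x = (((N : ℝ) - 1) / polar F x) • gradient (polar F) x) ∧
      -- (ii) F(∇v(x)) = (N−1)/F°(x)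
      F (gradient v x) = ((N : ℝ) - 1) / polar F x ∧
      -- (iii) z(x) · ∇v(x) = F(∇v(x)), F°(z(x)) = 1, and z(x) ∈ ∂F(∇v(x))
      (⟪z x, gradient v x⟫ = F (gradient v x) ∧
        polar F (z x) = 1 ∧
        ∀ w : EuclideanSpace ℝ (Fin N),
          F (gradient v x) + ⟪z x, w - gradient v x⟫ ≤ F w) ∧
      -- (iv) div z(x) = F(∇v(x))
      (DifferentiableAt ℝ z x ∧
        LinearMap.trace ℝ (EuclideanSpace ℝ (Fin N)) (fderiv ℝ z x).toLinearMap
          = F (gradient v x))) ∧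
    -- boundary condition: v = 0 on the boundary of the Wulff shape W_R
    (∀ x : EuclideanSpace ℝ (Fin N), polar F x = R → v x = 0) := by
  have hF : IsNormAux F := ⟨hF_add, hF_smul, hF_pos⟩
  have hvf : v = fun x => ((N : ℝ) - 1) * Real.log (polar F x / R) := funext hv
  have hzf : z = fun x => (polar F x)⁻¹ • x := funext hz
  subst hvf hzf
  constructor
  · intro x hx hd
    set G := polar F with hG
    have hGx : 0 < G x := polar_pos hF hN hx
    set d := fderiv ℝ G x with hdd
    have hdx : d x = G x := polar_fderiv_self hF hN hd
    have hdle : ∀ w, d w ≤ G w := polar_fderiv_le hF hN hd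
    set g := gradient G x with hg
    have hginner : ∀ w, (inner ℝ g w : ℝ) = d w := fun w => by
      rw [hg, gradient]; exact InnerProductSpace.toDual_symm_apply
    have hFg : F g = 1 := by
      have hge : 1 ≤ F g := by
        have h1 := inner_le_polar_mul hF hN x g
        have h2 : (inner ℝ x g : ℝ) = G x := by rw [real_inner_comm, hginner, hdx]
        rw [h2] at h1
        nlinarith
      have hle : F g ≤ 1 := by
        obtain ⟨y, hy1, hy2⟩ := exists_dual_vector_polar hF hN g
        have h3 : F g = d y := by rw [← hy2, real_inner_comm, hginner]
        rw [h3]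
        exact (hdle y).trans hy1
      linarith
    set c := ((N : ℝ) - 1) / G x with hc
    have hc0 : 0 < c := by
      apply div_pos _ hGx
      have h2 : (2:ℝ) ≤ (N:ℝ) := by exact_mod_cast hN
      linarith
    have hdiffv : HasFDerivAt (fun y => ((N : ℝ) - 1) * Real.log (G y / R)) (c • d) x := by
      have h0 : HasFDerivAt G d x := hd.hasFDerivAt
      have h1 : HasFDerivAt (fun y => R⁻¹ * G y) (R⁻¹ • d) x := h0.const_mul R⁻¹
      have h2 : R⁻¹ * G x ≠ 0 := by positivity
      have h3 := (h1.log h2).const_mul ((N : ℝ) - 1)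
      have h4 : (fun y => ((N : ℝ) - 1) * Real.log (G y / R))
          = fun y => ((N : ℝ) - 1) * Real.log (R⁻¹ * G y) := by
        funext y; rw [div_eq_inv_mul]
      rw [h4]
      refine h3.congr_fderiv ?_
      symm
      rw [smul_smul, smul_smul, hc]
      congr 1
      field_simp
    have hfderivv : fderiv ℝ (fun y => ((N : ℝ) - 1) * Real.log (G y / R)) x = c • d :=
      hdiffv.fderiv
    have hgradv : gradient (fun y => ((N : ℝ) - 1) * Real.log (G y / R)) x = c • g := by
      rw [gradient, hfderivv, map_smul, hg, gradient, hdd]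
    have hFgradv : F (gradient (fun y => ((N : ℝ) - 1) * Real.log (G y / R)) x) = c := by
      rw [hgradv, hF.smul, abs_of_pos hc0, hFg, mul_one]
    have hzinner : (inner ℝ ((G x)⁻¹ • x) (c • g) : ℝ) = c := by
      rw [real_inner_smul_left, real_inner_smul_right, real_inner_comm, hginner, hdx]
      field_simp
    have hpolarz : polar F ((G x)⁻¹ • x) = 1 := by
      rw [polar_smul hF hN, abs_of_pos (inv_pos.mpr hGx), ← hG, inv_mul_cancel₀ hGx.ne']
    refine ⟨⟨hdiffv.differentiableAt, hgradv⟩, hFgradv, ⟨?_, hpolarz, ?_⟩, ?_, ?_⟩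
    · show (inner ℝ ((G x)⁻¹ • x) _ : ℝ) = _
      rw [hgradv, hzinner, hF.smul, abs_of_pos hc0, hFg, mul_one]
    · intro w
      show F _ + (inner ℝ ((G x)⁻¹ • x) (w - _) : ℝ) ≤ F w
      rw [hFgradv, inner_sub_right, hgradv, hzinner]
      have h1 := inner_le_polar_mul hF hN ((G x)⁻¹ • x) w
      rw [hpolarz, one_mul] at h1
      linarith
    · have hinv : HasDerivAt (fun t : ℝ => t⁻¹) (-(G x ^ 2)⁻¹) (G x) := hasDerivAt_inv hGx.ne'
      have h2 : HasFDerivAt (fun y => (G y)⁻¹) ((-(G x ^ 2)⁻¹) • d) x := by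
        exact hinv.comp_hasFDerivAt x hd.hasFDerivAt
      exact (h2.smul (hasFDerivAt_id x)).differentiableAt
    · have hinv : HasDerivAt (fun t : ℝ => t⁻¹) (-(G x ^ 2)⁻¹) (G x) := hasDerivAt_inv hGx.ne'
      have h2 : HasFDerivAt (fun y => (G y)⁻¹) ((-(G x ^ 2)⁻¹) • d) x := by
        exact hinv.comp_hasFDerivAt x hd.hasFDerivAt
      have h3 : HasFDerivAt (fun y => (G y)⁻¹ • y)
          ((G x)⁻¹ • ContinuousLinearMap.id ℝ (EuclideanSpace ℝ (Fin N))
            + ((-(G x ^ 2)⁻¹) • d).smulRight x) x := h2.smul (hasFDerivAt_id x)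
      rw [h3.fderiv]
      have e1 : (((G x)⁻¹ • ContinuousLinearMap.id ℝ (EuclideanSpace ℝ (Fin N))
            + ((-(G x ^ 2)⁻¹) • d).smulRight x) : _ →L[ℝ] _).toLinearMap
          = (G x)⁻¹ • (LinearMap.id : EuclideanSpace ℝ (Fin N) →ₗ[ℝ] EuclideanSpace ℝ (Fin N))
            + LinearMap.smulRight (((-(G x ^ 2)⁻¹) • d :
              EuclideanSpace ℝ (Fin N) →L[ℝ] ℝ) : EuclideanSpace ℝ (Fin N) →ₗ[ℝ] ℝ) x := by
        ext u; simp
      rw [e1, map_add, map_smul, LinearMap.trace_id, trace_smulRight]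
      have e2 : (((-(G x ^ 2)⁻¹) • d : EuclideanSpace ℝ (Fin N) →L[ℝ] ℝ) :
          EuclideanSpace ℝ (Fin N) →ₗ[ℝ] ℝ) x = -(G x)⁻¹ := by
        simp only [ContinuousLinearMap.coe_smul, LinearMap.smul_apply,
          ContinuousLinearMap.coe_coe, smul_eq_mul]
        rw [hdx]
        field_simp
      rw [e2, hFgradv, finrank_euclideanSpace_fin]
      rw [hc]
      field_simp
      rw [smul_eq_mul, one_div, mul_inv_cancel_left₀ hGx.ne']
      ring
  · intro x hx
    show ((N : ℝ) - 1) * Real.log (polar F x / R) = 0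
    rw [hx, div_self hR.ne', Real.log_one, mul_zero]
end

section
/- Let 1 < p < N be real numbers, set p' := p/(p−1), θ := N/(N−p), σ₀ := (2N − p)/(2N p'), σ₁ := θσ₀, and define g(s) := |s| p / |s p − p + 1| for real s with s p ≠ p − 1. Then: (i) σ₀ < 1/p' < σ₁; (ii) g(σ₀) = g(σ₁) = 2N/p − 1; and (iii) for every integer l ∈ ℤ, g(θ^l σ₀) ≤ 2N/p − 1. -/
/-- The factor `g(s) = |s| p / |sp − p + 1|` from the Moser iteration. -/
noncomputable def moserFactor (p s : ℝ) : ℝ := |s| * p / |s * p - p + 1|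

set_option maxHeartbeats 1000000 in
/-- Elementary facts about the factor `g(s) = |s|p/|sp − p + 1|` in the Moser
iteration of the anisotropic Harnack inequality: with `p' = p/(p−1)`,
`θ = N/(N−p)`, `σ₀ = (2N − p)/(2Np')` and `σ₁ = θσ₀`, one has
`σ₀ < 1/p' < σ₁`, `g(σ₀) = g(σ₁) = 2N/p − 1`, and `g(θ^l σ₀) ≤ 2N/p − 1`
for every integer `l`. -/
theorem moser_factor_bounds {N : ℕ}
    (p : ℝ) (hp : 1 < p) (hpN : p < N)
    (p' θ σ₀ σ₁ : ℝ)
    (hp' : p' = p / (p - 1))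
    (hθ : θ = (N : ℝ) / ((N : ℝ) - p))
    (hσ₀ : σ₀ = (2 * (N : ℝ) - p) / (2 * (N : ℝ) * p'))
    (hσ₁ : σ₁ = θ * σ₀) :
    (σ₀ < 1 / p' ∧ 1 / p' < σ₁) ∧
    (moserFactor p σ₀ = 2 * (N : ℝ) / p - 1 ∧
      moserFactor p σ₁ = 2 * (N : ℝ) / p - 1) ∧
    (∀ l : ℤ, moserFactor p (θ ^ l * σ₀) ≤ 2 * (N : ℝ) / p - 1) := by
  have hN : (1 : ℝ) < N := lt_trans hp hpN
  have hp0 : (0 : ℝ) < p := by linarith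
  have hp1 : (0 : ℝ) < p - 1 := by linarith
  have hNp : (0 : ℝ) < (N : ℝ) - p := by linarith
  have hN0 : (0 : ℝ) < (N : ℝ) := by linarith
  have h2Np : (0 : ℝ) < 2 * (N : ℝ) - p := by linarith
  have h1p' : 1 / p' = (p - 1) / p := by
    rw [hp', one_div_div]
  have hσ₀v : σ₀ = ((2 * (N : ℝ) - p) * (p - 1)) / (2 * (N : ℝ) * p) := by
    rw [hσ₀, hp']; field_simp
  have hσ₁v : σ₁ = ((2 * (N : ℝ) - p) * (p - 1)) / (2 * ((N : ℝ) - p) * p) := by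
    rw [hσ₁, hθ, hσ₀v]; field_simp
  have hσ₀pos : 0 < σ₀ := by rw [hσ₀v]; positivity
  have hθ1 : 1 < θ := by
    rw [hθ]; rw [lt_div_iff₀ hNp]; linarith
  have hbound : 2 * (N : ℝ) / p - 1 = (2 * (N : ℝ) - p) / p := by
    field_simp
  -- key monotonicity bound
  have key : ∀ s : ℝ, 0 < s → (s ≤ σ₀ ∨ σ₁ ≤ s) →
      moserFactor p s ≤ 2 * (N : ℝ) / p - 1 := by
    intro s hs hcase
    rw [hbound]
    unfold moserFactor
    rw [abs_of_pos hs]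
    rcases hcase with hle | hge
    · have h2 : s * (2 * (N : ℝ) * p) ≤ (2 * (N : ℝ) - p) * (p - 1) := by
        rw [hσ₀v, le_div_iff₀ (by positivity)] at hle
        linarith
      have hsp : s * p < p - 1 := by nlinarith
      have habs : |s * p - p + 1| = p - 1 - s * p := by
        rw [abs_of_neg (by linarith)]; ring
      rw [habs, div_le_div_iff₀ (by linarith) hp0]
      nlinarith
    · have h2 : (2 * (N : ℝ) - p) * (p - 1) ≤ s * (2 * ((N : ℝ) - p) * p) := by
        rw [hσ₁v, div_le_iff₀ (by positivity)] at hge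
        linarith
      have hsp : p - 1 < s * p := by nlinarith
      have habs : |s * p - p + 1| = s * p - p + 1 := by
        rw [abs_of_pos (by linarith)]
      rw [habs, div_le_div_iff₀ (by linarith) hp0]
      nlinarith
  refine ⟨⟨?_, ?_⟩, ⟨?_, ?_⟩, ?_⟩
  · rw [h1p', hσ₀v, div_lt_div_iff₀ (by positivity) hp0]
    nlinarith [mul_pos (mul_pos hp1 hp0) hp0]
  · rw [h1p', hσ₁v, div_lt_div_iff₀ hp0 (by positivity)]
    nlinarith [mul_pos (mul_pos hp1 hp0) hp0]
  · unfold moserFactor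
    rw [abs_of_pos hσ₀pos]
    have h1 : σ₀ * p - p + 1 = -(p * (p - 1) / (2 * (N : ℝ))) := by
      rw [hσ₀v]; field_simp; ring
    rw [h1, abs_neg, abs_of_pos (by positivity), hσ₀v]
    field_simp
  · have hσ₁pos : 0 < σ₁ := by rw [hσ₁v]; positivity
    unfold moserFactor
    rw [abs_of_pos hσ₁pos]
    have h1 : σ₁ * p - p + 1 = p * (p - 1) / (2 * ((N : ℝ) - p)) := by
      rw [hσ₁v]; field_simp; ring
    rw [h1, abs_of_pos (by positivity), hσ₁v]
    field_simp
  · intro l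
    have hθ0 : (0 : ℝ) < θ := by linarith
    have hspos : 0 < θ ^ l * σ₀ := by positivity
    apply key _ hspos
    rcases le_or_gt l 0 with hl | hl
    · left
      have h1 : θ ^ l ≤ 1 := zpow_le_one_of_nonpos₀ (le_of_lt hθ1) hl
      nlinarith
    · right
      have h1 : (1 : ℝ) ≤ θ ^ (l - 1) :=
        one_le_zpow₀ (le_of_lt hθ1) (by omega)
      have h2 : θ ^ l = θ * θ ^ (l - 1) := by
        rw [show l = 1 + (l - 1) by ring, zpow_add₀ (ne_of_gt hθ0), zpow_one]
        ring_nf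
      rw [hσ₁, h2]
      nlinarith [mul_nonneg (mul_pos hθ0 hσ₀pos).le (sub_nonneg.mpr h1)]
end

section
/- Let s(x) := √(x² + 3/4) and define, on the open region U := { (x, y) ∈ ℝ² : x > 0 and y² < x² + 3/4 }, the function v(x, y) := (1/2) log( (x + s(x)) / (3 (s(x) − x)) ) and the vector field z(x, y) := (1, y/s(x)). Then on U: (i) v is differentiable with ∂v/∂x = 1/s(x) and ∂v/∂y = 0, so that the ℓ¹-norm of the gradient satisfies ‖∇v(x,y)‖₁ = 1/s(x); (ii) z is differentiable with divergence div z(x, y) = 1/s(x) = ‖∇v(x,y)‖₁; (iii) z(x,y) · ∇v(x,y) = ‖∇v(x,y)‖₁; and (iv) ‖z(x,y)‖_∞ ≤ 1. -/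
/-- Pointwise verification, in the region `{x > 0, y² < x² + 3/4}`, of the
explicit solution of the crystalline inverse mean curvature flow with
anisotropy `F = ℓ¹` starting from the rectangle `]−1/2,1/2[ × ]−1,1[`
(Example 9.2 of the paper): with `s(x) = √(x² + 3/4)`,
`v(x,y) = (1/2) log((x + s(x))/(3(s(x) − x)))` and `z(x,y) = (1, y/s(x))`,
one has `∂v/∂x = 1/s(x)`, `∂v/∂y = 0`, `‖∇v‖₁ = 1/s(x)`,
`div z = 1/s(x) = ‖∇v‖₁`, `z · ∇v = ‖∇v‖₁`, and `‖z‖_∞ ≤ 1`. -/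
theorem rectangle_crystalline_solution
    (s : ℝ → ℝ) (hs : ∀ x : ℝ, s x = Real.sqrt (x ^ 2 + 3 / 4))
    (v : ℝ × ℝ → ℝ)
    (hv : ∀ q : ℝ × ℝ, v q = (1 / 2) * Real.log ((q.1 + s q.1) / (3 * (s q.1 - q.1))))
    (z : ℝ × ℝ → ℝ × ℝ)
    (hz : ∀ q : ℝ × ℝ, z q = (1, q.2 / s q.1)) :
    ∀ q : ℝ × ℝ, 0 < q.1 → q.2 ^ 2 < q.1 ^ 2 + 3 / 4 →
      -- (i) v is differentiable with ∂v/∂x = 1/s(x), ∂v/∂y = 0,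
      -- so that ‖∇v‖₁ = 1/s(x)
      (DifferentiableAt ℝ v q ∧
        fderiv ℝ v q (1, 0) = 1 / s q.1 ∧
        fderiv ℝ v q (0, 1) = 0 ∧
        |fderiv ℝ v q (1, 0)| + |fderiv ℝ v q (0, 1)| = 1 / s q.1) ∧
      -- (ii) z is differentiable with div z = 1/s(x) = ‖∇v‖₁
      (DifferentiableAt ℝ z q ∧
        fderiv ℝ (fun r => (z r).1) q (1, 0) + fderiv ℝ (fun r => (z r).2) q (0, 1)
          = 1 / s q.1 ∧
        fderiv ℝ (fun r => (z r).1) q (1, 0) + fderiv ℝ (fun r => (z r).2) q (0, 1)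
          = |fderiv ℝ v q (1, 0)| + |fderiv ℝ v q (0, 1)|) ∧
      -- (iii) z · ∇v = ‖∇v‖₁
      fderiv ℝ v q (z q) = |fderiv ℝ v q (1, 0)| + |fderiv ℝ v q (0, 1)| ∧
      -- (iv) ‖z‖_∞ ≤ 1
      max |(z q).1| |(z q).2| ≤ 1 := by
  intro q ha hb
  obtain ⟨a, b⟩ := q
  simp only at ha hb ⊢
  -- basic facts about t := √(a² + 3/4)
  have h34 : (0:ℝ) < a ^ 2 + 3 / 4 := by positivity
  have hsa : s a = Real.sqrt (a ^ 2 + 3 / 4) := hs a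
  have tpos : 0 < Real.sqrt (a ^ 2 + 3 / 4) := Real.sqrt_pos.mpr h34
  have tsq : Real.sqrt (a ^ 2 + 3 / 4) ^ 2 = a ^ 2 + 3 / 4 := Real.sq_sqrt h34.le
  set t := Real.sqrt (a ^ 2 + 3 / 4) with htdef
  have tgt : a < t := by nlinarith
  have hNpos : 0 < a + t := by linarith
  have hDpos : 0 < 3 * (t - a) := by linarith
  -- derivative of the square root
  have hder_s : HasDerivAt (fun x : ℝ => Real.sqrt (x ^ 2 + 3 / 4)) (a / t) a := by
    have h1 : HasDerivAt (fun x : ℝ => x ^ 2 + 3 / 4) (2 * a) a := by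
      simpa using (hasDerivAt_pow 2 a).add_const (3 / 4)
    have h2 := h1.sqrt h34.ne'
    convert h2 using 1
    rw [← htdef]
    field_simp
  -- derivative of v in the x variable
  have hN : HasDerivAt (fun x : ℝ => x + Real.sqrt (x ^ 2 + 3 / 4)) (1 + a / t) a :=
    (hasDerivAt_id a).add hder_s
  have hD : HasDerivAt (fun x : ℝ => 3 * (Real.sqrt (x ^ 2 + 3 / 4) - x)) (3 * (a / t - 1)) a :=
    (hder_s.sub (hasDerivAt_id a)).const_mul 3
  have hDne : (3 : ℝ) * (t - a) ≠ 0 := hDpos.ne'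
  have hQ := hN.div hD hDne
  have hQne : (a + t) / (3 * (t - a)) ≠ 0 := by positivity
  have hF : HasDerivAt
      (fun x : ℝ => (1 / 2) * Real.log ((x + Real.sqrt (x ^ 2 + 3 / 4)) /
        (3 * (Real.sqrt (x ^ 2 + 3 / 4) - x)))) (1 / t) a := by
    have hlog := (hQ.log hQne).const_mul (1 / 2 : ℝ)
    refine hlog.congr_deriv ?_
    symm
    simp only [Pi.div_apply]
    rw [← htdef]
    have h1 : t ≠ 0 := tpos.ne'
    have h2 : t - a ≠ 0 := by linarith
    have h3 : a + t ≠ 0 := hNpos.ne'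
    field_simp
    nlinarith [tsq, tpos, sq_nonneg t]
  have hveq : v = (fun x : ℝ => (1 / 2) * Real.log ((x + Real.sqrt (x ^ 2 + 3 / 4)) /
      (3 * (Real.sqrt (x ^ 2 + 3 / 4) - x)))) ∘ Prod.fst := by
    funext r
    simp only [Function.comp]
    rw [hv r, hs r.1]
  have hVF : HasFDerivAt v ((1 / t) • (ContinuousLinearMap.fst ℝ ℝ ℝ)) (a, b) := by
    rw [hveq]
    exact hF.comp_hasFDerivAt (a, b) hasFDerivAt_fst
  have hfdv : fderiv ℝ v (a, b) = (1 / t) • (ContinuousLinearMap.fst ℝ ℝ ℝ) := hVF.fderiv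
  have hv10 : fderiv ℝ v (a, b) (1, 0) = 1 / t := by
    rw [hfdv]; simp
  have hv01 : fderiv ℝ v (a, b) (0, 1) = 0 := by
    rw [hfdv]; simp
  -- the second component of z
  have hsig : HasFDerivAt (fun r : ℝ × ℝ => Real.sqrt (r.1 ^ 2 + 3 / 4))
      ((a / t) • (ContinuousLinearMap.fst ℝ ℝ ℝ)) (a, b) :=
    hder_s.comp_hasFDerivAt (h₂ := fun x : ℝ => Real.sqrt (x ^ 2 + 3 / 4)) (f := Prod.fst) (a, b)
      (hasFDerivAt_fst (𝕜 := ℝ) (E := ℝ) (F := ℝ))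
  have hinv : HasDerivAt (fun x : ℝ => (Real.sqrt (x ^ 2 + 3 / 4))⁻¹) (-(a / t) / t ^ 2) a :=
    hder_s.inv tpos.ne'
  have hinvF : HasFDerivAt (fun r : ℝ × ℝ => (Real.sqrt (r.1 ^ 2 + 3 / 4))⁻¹)
      ((-(a / t) / t ^ 2) • (ContinuousLinearMap.fst ℝ ℝ ℝ)) (a, b) :=
    hinv.comp_hasFDerivAt (h₂ := fun x : ℝ => (Real.sqrt (x ^ 2 + 3 / 4))⁻¹) (f := Prod.fst) (a, b)
      (hasFDerivAt_fst (𝕜 := ℝ) (E := ℝ) (F := ℝ))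
  have hg : HasFDerivAt (fun r : ℝ × ℝ => r.2 * (Real.sqrt (r.1 ^ 2 + 3 / 4))⁻¹)
      (b • ((-(a / t) / t ^ 2) • (ContinuousLinearMap.fst ℝ ℝ ℝ)) +
        t⁻¹ • (ContinuousLinearMap.snd ℝ ℝ ℝ)) (a, b) :=
    (hasFDerivAt_snd (𝕜 := ℝ) (E := ℝ) (F := ℝ)).mul hinvF
  have hzeq : z = fun r : ℝ × ℝ => ((1 : ℝ), r.2 * (Real.sqrt (r.1 ^ 2 + 3 / 4))⁻¹) := by
    funext r
    rw [hz r, hs r.1, div_eq_mul_inv]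
  have hz1 : (fun r : ℝ × ℝ => (z r).1) = fun _ : ℝ × ℝ => (1 : ℝ) := by
    funext r; rw [hz r]
  have hz2 : (fun r : ℝ × ℝ => (z r).2)
      = fun r : ℝ × ℝ => r.2 * (Real.sqrt (r.1 ^ 2 + 3 / 4))⁻¹ := by
    funext r; rw [hz r, hs r.1, div_eq_mul_inv]
  have hd1 : fderiv ℝ (fun r : ℝ × ℝ => (z r).1) (a, b) (1, 0) = 0 := by
    rw [hz1, fderiv_fun_const]; simp
  have hd2 : fderiv ℝ (fun r : ℝ × ℝ => (z r).2) (a, b) (0, 1) = 1 / t := by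
    rw [hz2, hg.fderiv]
    simp [one_div]
  have hbt : |b| < t := by
    calc |b| = Real.sqrt (b ^ 2) := (Real.sqrt_sq_eq_abs b).symm
    _ < t := Real.sqrt_lt_sqrt (sq_nonneg b) hb
  refine ⟨⟨hVF.differentiableAt, ?_, ?_, ?_⟩, ⟨?_, ?_, ?_⟩, ?_, ?_⟩
  · rw [hv10, hsa]
  · exact hv01
  · rw [hv10, hv01, hsa, abs_zero, abs_of_pos (by positivity), add_zero]
  · rw [hzeq]
    exact DifferentiableAt.prodMk (differentiableAt_const (1 : ℝ)) hg.differentiableAt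
  · rw [hd1, hd2, hsa, zero_add]
  · rw [hd1, hd2, hv10, hv01, abs_zero, abs_of_pos (by positivity), zero_add, add_zero]
  · rw [hz (a, b)]
    simp only
    rw [hv10, hv01, abs_zero, abs_of_pos (by positivity : (0:ℝ) < 1 / t), add_zero, hfdv]
    simp
  · rw [hz (a, b)]
    simp only
    refine max_le (by norm_num) ?_
    rw [abs_div, hsa, abs_of_pos tpos, div_le_one tpos]
    linarith
end
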